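/- Define for j ≠ k the functions f_{jk}(θ) = cot((θ_j−θ_k)/2) on the chamber θ₁ < θ₂ < ⋯ < θₙ < θ₁+2π. Then the functions F_j = ∑_{k≠j} f_{jk} satisfy the identity ∑_{j=1}^n F_j² = −2 ∑_{j=1}^n F_j′ − n(n²−1)/3, where F_j′ = ∑_{k≠j} f′(θ_j−θ_k) with f(x) = cot(x/2) and f′(x) = −1/(2 sin²(x/2)). -/

import Mathlib

lemma cot_neg' (x : ℝ) : Real.cot (-x) = -Real.cot x := by
  rw [Real.cot_eq_cos_div_sin, Real.cot_eq_cos_div_sin, Real.sin_neg, Real.cos_neg, div_neg]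

lemma cot_triple {a b c : ℝ} (h : a + b + c = 0) (ha : Real.sin a ≠ 0)
    (hb : Real.sin b ≠ 0) (hc : Real.sin c ≠ 0) :
    Real.cot a * Real.cot b + Real.cot b * Real.cot c + Real.cot c * Real.cot a = 1 := by
  have hc' : c = -(a + b) := by linarith
  subst hc'
  rw [Real.sin_neg, neg_ne_zero] at hc
  rw [Real.cot_eq_cos_div_sin, Real.cot_eq_cos_div_sin, Real.cot_eq_cos_div_sin,
    Real.sin_neg, Real.cos_neg, div_neg]
  field_simp
  rw [Real.sin_add, Real.cos_add]
  nlinarith [Real.sin_sq_add_cos_sq a, Real.sin_sq_add_cos_sq b]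

lemma cot_sq (x : ℝ) (hx : Real.sin x ≠ 0) :
    -(2:ℝ) * (-(1 / (2 * Real.sin x ^ 2))) = Real.cot x ^ 2 + 1 := by
  rw [Real.cot_eq_cos_div_sin]
  field_simp
  linarith [Real.sin_sq_add_cos_sq x]

lemma erase_sum_ite {α : Type*} [Fintype α] [DecidableEq α] (a : α) (f : α → ℝ) :
    ∑ x ∈ Finset.univ.erase a, f x = ∑ x, if x ≠ a then f x else 0 := by
  rw [← Finset.sum_filter, Finset.filter_ne']

lemma erase2_sum_ite {α : Type*} [Fintype α] [DecidableEq α] (a b : α) (f : α → ℝ) :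
    ∑ x ∈ (Finset.univ.erase a).erase b, f x = ∑ x, if x ≠ a ∧ x ≠ b then f x else 0 := by
  rw [← Finset.sum_filter, ← Finset.filter_filter, Finset.filter_ne', Finset.filter_ne']

lemma conv_sum {n : ℕ} (F : Fin n → Fin n → Fin n → ℝ) :
    ∑ j, ∑ k ∈ Finset.univ.erase j, ∑ l ∈ (Finset.univ.erase j).erase k, F j k l
    = ∑ p ∈ Finset.univ.filter
        (fun p : Fin n × Fin n × Fin n => p.2.1 ≠ p.1 ∧ p.2.2 ≠ p.1 ∧ p.2.2 ≠ p.2.1),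
        F p.1 p.2.1 p.2.2 := by
  rw [Finset.sum_filter]
  simp only [Fintype.sum_prod_type]
  refine Finset.sum_congr rfl fun j _ => ?_
  rw [erase_sum_ite]
  refine Finset.sum_congr rfl fun k _ => ?_
  by_cases h : k = j
  · simp [h]
  · simp only [h, Ne, not_false_iff, if_true]
    rw [erase2_sum_ite]
    refine Finset.sum_congr rfl fun l _ => ?_
    by_cases h1 : l = j <;> by_cases h2 : l = k <;> simp [h, h1, h2]

lemma cyc_sum {n : ℕ} (F : Fin n → Fin n → Fin n → ℝ) :
    ∑ p ∈ Finset.univ.filter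
        (fun p : Fin n × Fin n × Fin n => p.2.1 ≠ p.1 ∧ p.2.2 ≠ p.1 ∧ p.2.2 ≠ p.2.1),
        F p.1 p.2.1 p.2.2
    = ∑ p ∈ Finset.univ.filter
        (fun p : Fin n × Fin n × Fin n => p.2.1 ≠ p.1 ∧ p.2.2 ≠ p.1 ∧ p.2.2 ≠ p.2.1),
        F p.2.1 p.2.2 p.1 := by
  refine Finset.sum_nbij' (fun p => (p.2.2, p.1, p.2.1)) (fun p => (p.2.1, p.2.2, p.1))
    ?_ ?_ ?_ ?_ ?_ <;>
    simp only [Finset.mem_filter, Finset.mem_univ, true_and] <;>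
    intro p hp <;> try tauto

/-- On the chamber θ₁ < ⋯ < θₙ < θ₁ + 2π, with F_j = ∑_{k≠j} cot((θ_j−θ_k)/2)
and F_j′ = ∑_{k≠j} (−1/(2sin²((θ_j−θ_k)/2))), one has
∑_j F_j² = −2∑_j F_j′ − n(n²−1)/3. -/
theorem stmt_3 (n : ℕ) (hn : 2 ≤ n) (θ : Fin n → ℝ)
    (hord : ∀ i j : Fin n, i < j → θ i < θ j)
    (hwin : ∀ i : Fin n, θ i < θ ⟨0, by omega⟩ + 2 * Real.pi) :
    ∑ j, (∑ k ∈ Finset.univ.erase j, Real.cot ((θ j - θ k) / 2)) ^ 2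
      = -2 * ∑ j, (∑ k ∈ Finset.univ.erase j,
            (-(1 / (2 * Real.sin ((θ j - θ k) / 2) ^ 2))))
        - (n : ℝ) * ((n : ℝ) ^ 2 - 1) / 3 := by
  have hpi := Real.pi_pos
  set z : Fin n := ⟨0, by omega⟩ with hz
  have hlo : ∀ i : Fin n, θ z ≤ θ i := by
    intro i
    rcases eq_or_lt_of_le (show z ≤ i by simp [hz, Fin.le_def]) with h | h
    · rw [h]
    · exact le_of_lt (hord _ _ h)
  have hbound : ∀ j k : Fin n, j ≠ k → (θ j - θ k) / 2 ∈ Set.Ioo (-Real.pi) Real.pi ∧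
      (θ j - θ k) ≠ 0 := by
    intro j k hjk
    have h1 := hwin j
    have h2 := hwin k
    have h3 := hlo j
    have h4 := hlo k
    constructor
    · constructor <;> [nlinarith; nlinarith]
    · rcases lt_trichotomy j k with h | h | h
      · have := hord j k h; intro hh; linarith
      · exact absurd h hjk
      · have := hord k j h; intro hh; linarith
  have hsin : ∀ j k : Fin n, j ≠ k → Real.sin ((θ j - θ k) / 2) ≠ 0 := by
    intro j k hjk
    obtain ⟨⟨hl, hr⟩, hne⟩ := hbound j k hjk
    rcases lt_trichotomy ((θ j - θ k) / 2) 0 with h | h | h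
    · have : Real.sin (-((θ j - θ k) / 2)) > 0 :=
        Real.sin_pos_of_pos_of_lt_pi (by linarith) (by linarith)
      rw [Real.sin_neg] at this
      linarith
    · exact absurd (by linarith : θ j - θ k = 0) hne
    · exact ne_of_gt (Real.sin_pos_of_pos_of_lt_pi h hr)
  set g : Fin n → Fin n → ℝ := fun j k => Real.cot ((θ j - θ k) / 2) with hgdef
  -- RHS first sum
  have hrhs : -2 * ∑ j, (∑ k ∈ Finset.univ.erase j,
      (-(1 / (2 * Real.sin ((θ j - θ k) / 2) ^ 2))))
      = (∑ j, ∑ k ∈ Finset.univ.erase j, (g j k) ^ 2) + (n : ℝ) * ((n : ℝ) - 1) := by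
    rw [Finset.mul_sum]
    have : ∀ j : Fin n, -2 * (∑ k ∈ Finset.univ.erase j,
        (-(1 / (2 * Real.sin ((θ j - θ k) / 2) ^ 2))))
        = (∑ k ∈ Finset.univ.erase j, (g j k) ^ 2) + ((n : ℝ) - 1) := by
      intro j
      rw [Finset.mul_sum]
      have := fun k (hk : k ∈ Finset.univ.erase j) =>
        cot_sq ((θ j - θ k) / 2) (hsin j k (Finset.ne_of_mem_erase hk).symm)
      rw [Finset.sum_congr rfl this, Finset.sum_add_distrib, Finset.sum_const,
        Finset.card_erase_of_mem (Finset.mem_univ j), Finset.card_univ, Fintype.card_fin,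
        nsmul_eq_mul, mul_one, Nat.cast_sub (by omega : 1 ≤ n), Nat.cast_one]
    rw [Finset.sum_congr rfl fun j _ => this j, Finset.sum_add_distrib, Finset.sum_const,
      Finset.card_univ, Fintype.card_fin, nsmul_eq_mul]
  -- LHS expansion
  have hlhs : ∑ j, (∑ k ∈ Finset.univ.erase j, g j k) ^ 2
      = (∑ j, ∑ k ∈ Finset.univ.erase j, (g j k) ^ 2)
        + ∑ j, ∑ k ∈ Finset.univ.erase j, ∑ l ∈ (Finset.univ.erase j).erase k,
            g j k * g j l := by
    rw [← Finset.sum_add_distrib]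
    refine Finset.sum_congr rfl fun j _ => ?_
    rw [sq, Finset.sum_mul_sum, ← Finset.sum_add_distrib]
    refine Finset.sum_congr rfl fun k hk => ?_
    rw [← Finset.add_sum_erase _ (fun l => g j k * g j l) hk, ← sq]
  -- the triple sum S
  set S : ℝ := ∑ j, ∑ k ∈ Finset.univ.erase j, ∑ l ∈ (Finset.univ.erase j).erase k,
      g j k * g j l with hS
  have htriple : ∀ j k l : Fin n, k ≠ j → l ≠ j → l ≠ k →
      g j k * g j l + g k l * g k j + g l j * g l k = -1 := by
    intro j k l hkj hlj hlk
    have habc : (θ j - θ k) / 2 + (θ k - θ l) / 2 + (θ l - θ j) / 2 = 0 := by ring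
    have h1 := cot_triple habc (hsin j k (Ne.symm hkj)) (hsin k l (Ne.symm hlk).symm.symm)
      (hsin l j hlj)
    have e1 : g j l = -Real.cot ((θ l - θ j) / 2) := by
      rw [hgdef]; dsimp only
      rw [show (θ j - θ l) / 2 = -((θ l - θ j) / 2) by ring, cot_neg']
    have e2 : g k j = -Real.cot ((θ j - θ k) / 2) := by
      rw [hgdef]; dsimp only
      rw [show (θ k - θ j) / 2 = -((θ j - θ k) / 2) by ring, cot_neg']
    have e3 : g l k = -Real.cot ((θ k - θ l) / 2) := by
      rw [hgdef]; dsimp only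
      rw [show (θ l - θ k) / 2 = -((θ k - θ l) / 2) by ring, cot_neg']
    rw [e1, e2, e3]
    have : g j k = Real.cot ((θ j - θ k) / 2) := rfl
    rw [this]
    have : g k l = Real.cot ((θ k - θ l) / 2) := rfl
    rw [this]
    have : g l j = Real.cot ((θ l - θ j) / 2) := rfl
    rw [this]
    linarith [h1]
  have hSval : S = -((n:ℝ) * ((n:ℝ) - 1) * ((n:ℝ) - 2)) / 3 := by
    have e1 : S = ∑ p ∈ Finset.univ.filter
        (fun p : Fin n × Fin n × Fin n => p.2.1 ≠ p.1 ∧ p.2.2 ≠ p.1 ∧ p.2.2 ≠ p.2.1),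
        g p.1 p.2.1 * g p.1 p.2.2 := conv_sum (fun j k l => g j k * g j l)
    have e2 : S = ∑ p ∈ Finset.univ.filter
        (fun p : Fin n × Fin n × Fin n => p.2.1 ≠ p.1 ∧ p.2.2 ≠ p.1 ∧ p.2.2 ≠ p.2.1),
        g p.2.1 p.2.2 * g p.2.1 p.1 := by
      rw [e1]; exact cyc_sum (fun j k l => g j k * g j l)
    have e3 : S = ∑ p ∈ Finset.univ.filter
        (fun p : Fin n × Fin n × Fin n => p.2.1 ≠ p.1 ∧ p.2.2 ≠ p.1 ∧ p.2.2 ≠ p.2.1),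
        g p.2.2 p.1 * g p.2.2 p.2.1 := by
      rw [e2]; exact cyc_sum (fun j k l => g k l * g k j)
    have ecard : ∑ p ∈ Finset.univ.filter
        (fun p : Fin n × Fin n × Fin n => p.2.1 ≠ p.1 ∧ p.2.2 ≠ p.1 ∧ p.2.2 ≠ p.2.1),
        (-1 : ℝ) = -((n:ℝ) * ((n:ℝ) - 1) * ((n:ℝ) - 2)) := by
      rw [← conv_sum (fun _ _ _ => (-1 : ℝ))]
      have h1 : ∀ j : Fin n, ∑ k ∈ Finset.univ.erase j,
          ∑ l ∈ (Finset.univ.erase j).erase k, (-1:ℝ)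
          = ((n:ℝ) - 1) * (-((n:ℝ) - 2)) := by
        intro j
        have h2 : ∀ k ∈ Finset.univ.erase j,
            ∑ l ∈ (Finset.univ.erase j).erase k, (-1:ℝ) = -((n:ℝ) - 2) := by
          intro k hk
          rw [Finset.sum_const, Finset.card_erase_of_mem hk,
            Finset.card_erase_of_mem (Finset.mem_univ j), Finset.card_univ, Fintype.card_fin,
            nsmul_eq_mul, show n - 1 - 1 = n - 2 from by omega,
            Nat.cast_sub (by omega : 2 ≤ n)]
          push_cast; ring
        rw [Finset.sum_congr rfl h2, Finset.sum_const,
          Finset.card_erase_of_mem (Finset.mem_univ j), Finset.card_univ, Fintype.card_fin,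
          nsmul_eq_mul, Nat.cast_sub (by omega : 1 ≤ n)]
        push_cast; ring
      rw [Finset.sum_congr rfl (fun j _ => h1 j), Finset.sum_const, Finset.card_univ,
        Fintype.card_fin, nsmul_eq_mul]
      ring
    have esum : S + S + S = -((n:ℝ) * ((n:ℝ) - 1) * ((n:ℝ) - 2)) := by
      rw [← ecard]
      nth_rewrite 1 [e1]
      nth_rewrite 1 [e2]
      nth_rewrite 1 [e3]
      rw [← Finset.sum_add_distrib, ← Finset.sum_add_distrib]
      refine Finset.sum_congr rfl fun p hp => ?_
      simp only [Finset.mem_filter, Finset.mem_univ, true_and] at hp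
      exact htriple p.1 p.2.1 p.2.2 hp.1 hp.2.1 hp.2.2
    linarith
  rw [hlhs, hrhs, hSval]
  ring
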